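/- Let f be L-smooth, h convex, λ = 1/(2L), and let ŷ = prox_{λh}(z − λ∇f(z)) for a point z. If ‖ŷ − z‖ ≤ √ε, then there exists d ∈ ∂h(ŷ) with ‖∇f(ŷ) + d‖ ≤ 3L√ε; i.e., 0 ∈ ∇f(ŷ) + ∂h(ŷ) + B(3L√ε). -/

import Mathlib

open RealInnerProductSpace

/-- If ŷ = prox_{λh}(z − λ∇f(z)) with λ = 1/(2L) and ‖ŷ − z‖ ≤ √ε, then there is a
subgradient d ∈ ∂h(ŷ) with ‖∇f(ŷ) + d‖ ≤ 3L√ε. -/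
theorem stmt13 {E : Type*} [NormedAddCommGroup E] [InnerProductSpace ℝ E] [CompleteSpace E]
    (f : E → ℝ) (g : E → E) (hgrad : ∀ x, HasGradientAt f (g x) x)
    (L : ℝ) (hL : 0 < L) (hlip : ∀ x y : E, ‖g x - g y‖ ≤ L * ‖x - y‖)
    (h : E → ℝ) (hconv : ConvexOn ℝ Set.univ h)
    (lam : ℝ) (hlam : lam = 1 / (2 * L))
    (ε : ℝ) (hε : 0 ≤ ε) (z yh : E)
    (hprox : ∀ u : E, h yh + (1 / (2 * lam)) * ‖yh - (z - lam • g z)‖ ^ 2 ≤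
      h u + (1 / (2 * lam)) * ‖u - (z - lam • g z)‖ ^ 2)
    (hclose : ‖yh - z‖ ≤ Real.sqrt ε) :
    ∃ d : E, (∀ u : E, h u ≥ h yh + ⟪d, u - yh⟫) ∧ ‖g yh + d‖ ≤ 3 * L * Real.sqrt ε := by
  have hlam0 : 0 < lam := by rw [hlam]; positivity
  set c : E := z - lam • g z with hc
  refine ⟨(1/lam) • (c - yh), ?_, ?_⟩
  · intro u
    rw [ge_iff_le]
    refine le_of_forall_pos_le_add (fun δ hδ => ?_)
    set t : ℝ := min 1 (δ * (2*lam) / (‖u - yh‖^2 + 1)) with ht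
    have hnn : (0:ℝ) < ‖u - yh‖^2 + 1 := by positivity
    have ht0 : 0 < t := by
      apply lt_min one_pos
      positivity
    have ht1 : t ≤ 1 := min_le_left _ _
    have key := hprox (yh + t • (u - yh))
    have hconvpt : h (yh + t • (u - yh)) ≤ (1 - t) * h yh + t * h u := by
      have := hconv.2 (Set.mem_univ yh) (Set.mem_univ u) (by linarith : (0:ℝ) ≤ 1 - t)
        (le_of_lt ht0) (by ring)
      have heq : (1 - t) • yh + t • u = yh + t • (u - yh) := by
        rw [smul_sub, sub_smul, one_smul]; abel
      rw [heq] at this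
      simpa using this
    have hnormexp : ‖yh + t • (u - yh) - c‖^2
        = ‖yh - c‖^2 + 2 * t * ⟪yh - c, u - yh⟫ + t^2 * ‖u - yh‖^2 := by
      have : yh + t • (u - yh) - c = (yh - c) + t • (u - yh) := by abel
      rw [this, norm_add_sq_real, real_inner_smul_right, norm_smul]
      simp [mul_pow]
      ring
    rw [hnormexp] at key
    -- key : h yh + A ≤ h(...) + (1/(2lam)) * (A' + 2t⟪..⟫ + t²‖..‖²)
    have hdiv : h yh ≤ h u + (1/lam) * ⟪yh - c, u - yh⟫ + (t/(2*lam)) * ‖u - yh‖^2 := by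
      have h2 : t * h yh ≤ t * h u + (1/(2*lam)) * (2 * t * ⟪yh - c, u - yh⟫ + t^2 * ‖u - yh‖^2) := by
        nlinarith [key, hconvpt]
      have h3 : t * h yh ≤ t * (h u + (1/lam) * ⟪yh - c, u - yh⟫ + (t/(2*lam)) * ‖u - yh‖^2) := by
        have hl : (1/(2*lam)) * (2 * t * ⟪yh - c, u - yh⟫ + t^2 * ‖u - yh‖^2)
            = t * ((1/lam) * ⟪yh - c, u - yh⟫ + (t/(2*lam)) * ‖u - yh‖^2) := by
          field_simp
        linarith [h2, hl ▸ h2]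
      exact le_of_mul_le_mul_left (by linarith [h3]) ht0 |>.trans (le_refl _) |>.trans (le_refl _)
    have hinner : ⟪(1/lam) • (c - yh), u - yh⟫ = -((1/lam) * ⟪yh - c, u - yh⟫) := by
      rw [real_inner_smul_left]
      have : (c - yh) = -(yh - c) := by abel
      rw [this, inner_neg_left]
      ring
    have htbound : (t/(2*lam)) * ‖u - yh‖^2 ≤ δ := by
      have ht2 : t ≤ δ * (2*lam) / (‖u - yh‖^2 + 1) := min_le_right _ _
      have h4 : (t/(2*lam)) * ‖u - yh‖^2 ≤ (δ * (2*lam) / (‖u - yh‖^2 + 1) / (2*lam)) * ‖u - yh‖^2 := by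
        apply mul_le_mul_of_nonneg_right _ (sq_nonneg _)
        apply div_le_div_of_nonneg_right ht2 ?_ |>.trans (le_refl _)
        · positivity
      have h5 : (δ * (2*lam) / (‖u - yh‖^2 + 1) / (2*lam)) * ‖u - yh‖^2
          = δ * (‖u - yh‖^2 / (‖u - yh‖^2 + 1)) := by
        field_simp
      have h6 : ‖u - yh‖^2 / (‖u - yh‖^2 + 1) ≤ 1 := by
        rw [div_le_one hnn]; linarith
      calc (t/(2*lam)) * ‖u - yh‖^2 ≤ δ * (‖u - yh‖^2 / (‖u - yh‖^2 + 1)) := by rw [← h5]; exact h4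
        _ ≤ δ * 1 := by apply mul_le_mul_of_nonneg_left h6 (le_of_lt hδ)
        _ = δ := mul_one _
    rw [hinner]
    linarith [hdiv, htbound]
  · have heq : g yh + (1/lam) • (c - yh) = (g yh - g z) + (1/lam) • (z - yh) := by
      rw [hc]
      have : z - lam • g z - yh = (z - yh) - lam • g z := by abel
      rw [this, smul_sub, smul_smul]
      rw [one_div, inv_mul_cancel₀ (ne_of_gt hlam0), one_smul]
      abel
    rw [heq]
    have h1 : ‖(g yh - g z) + (1/lam) • (z - yh)‖ ≤ ‖g yh - g z‖ + ‖(1/lam) • (z - yh)‖ :=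
      norm_add_le _ _
    have h2 : ‖g yh - g z‖ ≤ L * ‖yh - z‖ := hlip yh z
    have h3 : ‖(1/lam) • (z - yh)‖ = (2*L) * ‖yh - z‖ := by
      rw [norm_smul, hlam]
      have : ‖z - yh‖ = ‖yh - z‖ := norm_sub_rev _ _
      rw [this, Real.norm_eq_abs]
      rw [abs_of_pos (by positivity : (0:ℝ) < 1 / (1 / (2*L)))]
      field_simp
    have h4 : ‖(g yh - g z) + (1/lam) • (z - yh)‖ ≤ 3 * L * ‖yh - z‖ := by
      calc _ ≤ ‖g yh - g z‖ + ‖(1/lam) • (z - yh)‖ := h1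
        _ ≤ L * ‖yh - z‖ + (2*L) * ‖yh - z‖ := by rw [h3]; linarith
        _ = 3 * L * ‖yh - z‖ := by ring
    calc _ ≤ 3 * L * ‖yh - z‖ := h4
      _ ≤ 3 * L * Real.sqrt ε := by
        apply mul_le_mul_of_nonneg_left hclose (by positivity)
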